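/- (First soundness theorem) If Γ ⊢ r : φ is derivable in the simply typed λ-calculus, then the interpretation ⟦r⟧_Γ in any nominal model I is an element of ⟦φ⟧_Γ; moreover supp(⟦r⟧_Γ) ⊆ fa(r). -/
import Mathlib


/-! Background: atoms, permutations, simple types, λ-terms. -/

/-- Atoms (variables): a countably infinite set. -/
abbrev Atom := ℕ

/-- The set of atoms moved by a permutation. -/
def Nontriv (π : Equiv.Perm Atom) : Set Atom := {a | π a ≠ a}

/-- Simple types over a countably infinite set of base types. -/
inductive Ty : Type
  | base : ℕ → Ty
  | arr : Ty → Ty → Ty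
deriving DecidableEq

/-- Terms of the simply typed λ-calculus: atoms, constants (a constant carries a
name and its type), λ-abstraction and application. -/
inductive Term : Type
  | atom : Atom → Term
  | const : ℕ → Ty → Term
  | lam : Atom → Ty → Term → Term
  | app : Term → Term → Term
deriving DecidableEq

/-- Permutation action on terms. -/
def Term.perm (π : Equiv.Perm Atom) : Term → Term
  | .atom a => .atom (π a)
  | .const c φ => .const c φ
  | .lam a φ r => .lam (π a) φ (r.perm π)
  | .app r s => .app (r.perm π) (s.perm π)

/-- Free atoms of a term. -/
def Term.fa : Term → Finset Atom
  | .atom a => {a}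
  | .const _ _ => ∅
  | .lam a _ r => r.fa.erase a
  | .app r s => r.fa ∪ s.fa

/-- Capture-avoiding substitution `r[a := t]`, as a relation `Subst a t r r'`
(defined relationally on raw terms; the freshness side conditions on binders
can always be guaranteed by α-renaming). -/
inductive Subst (a : Atom) (t : Term) : Term → Term → Prop
  | atom_eq : Subst a t (.atom a) t
  | atom_ne {b : Atom} : b ≠ a → Subst a t (.atom b) (.atom b)
  | const {c : ℕ} {φ : Ty} : Subst a t (.const c φ) (.const c φ)
  | app {r r' s s' : Term} : Subst a t r r' → Subst a t s s' → Subst a t (.app r s) (.app r' s')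
  | lam {c : Atom} {φ : Ty} {r r' : Term} :
      c ≠ a → c ∉ t.fa → Subst a t r r' → Subst a t (.lam c φ r) (.lam c φ r')

/-- Type environments: finite functional sets of atomic typings `a : φ`. -/
abbrev Env := Finset (Atom × Ty)

/-- Functionality of an environment. -/
def Functional (Γ : Env) : Prop := ∀ ⦃a : Atom⦄ ⦃φ ψ : Ty⦄, (a, φ) ∈ Γ → (a, ψ) ∈ Γ → φ = ψ

/-- Domain of an environment. -/
def domE (Γ : Env) : Finset Atom := Γ.image Prod.fst

/-- Permutation action on environments. -/
def permE (π : Equiv.Perm Atom) (Γ : Env) : Env := Γ.image fun p => (π p.1, p.2)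

/-- Typing rules (V), (C), (L), (A) of the simply typed λ-calculus. -/
inductive Typing : Env → Term → Ty → Prop
  | V {Γ : Env} {a : Atom} {φ : Ty} : Functional Γ → (a, φ) ∈ Γ → Typing Γ (.atom a) φ
  | C {Γ : Env} {c : ℕ} {φ : Ty} : Functional Γ → Typing Γ (.const c φ) φ
  | L {Γ : Env} {a : Atom} {φ ψ : Ty} {r : Term} :
      a ∉ domE Γ → Typing (insert (a, φ) Γ) r ψ → Typing Γ (.lam a φ r) (.arr φ ψ)
  | A {Γ : Env} {φ ψ : Ty} {r s : Term} :
      Typing Γ r (.arr φ ψ) → Typing Γ s φ → Typing Γ (.app r s) ψ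

/-- β-equivalence: the least equivalence (on terms up to α-equivalence)
closed under (CongApp), (ξ), and (β). -/
inductive Beta : Term → Term → Prop
  | refl (r : Term) : Beta r r
  | symm {r s : Term} : Beta r s → Beta s r
  | trans {r s t : Term} : Beta r s → Beta s t → Beta r t
  | congApp {r r' s s' : Term} : Beta r r' → Beta s s' → Beta (.app r s) (.app r' s')
  | xi {a : Atom} {φ : Ty} {s s' : Term} : Beta s s' → Beta (.lam a φ s) (.lam a φ s')
  | beta {a : Atom} {φ : Ty} {r t r' : Term} :
      Subst a t r r' → Beta (.app (.lam a φ r) t) r'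
  | alpha {a b : Atom} {φ : Ty} {r : Term} :
      b ∉ r.fa → Beta (.lam a φ r) (.lam b φ (r.perm (Equiv.swap b a)))

section Model

/-- `A` supports `x` with respect to the action `act`. -/
def SupportsAct {D : Type*} (act : Equiv.Perm Atom → D → D) (A : Set Atom) (x : D) : Prop :=
  ∀ π : Equiv.Perm Atom, (Nontriv π).Finite → (∀ a ∈ A, π a = a) → act π x = x

/-- `a # x`: `a` is fresh for `x` (some finite set avoiding `a` supports `x`). -/
def FreshAct {D : Type*} (act : Equiv.Perm Atom → D → D) (a : Atom) (x : D) : Prop :=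
  ∃ A : Finset Atom, a ∉ A ∧ SupportsAct act (↑A) x

/-- A nominal (Henkin-style) model of the simply typed λ-calculus: an equivariant
assignment of finitely-supported sets `den Γ φ` together with interpretations of atoms,
constants, abstraction and application, satisfying the nominal algebra axioms for
substitution (Suba), (Sub#), (SubApp), (Subλ). -/
structure Model where
  D : Type
  act : Equiv.Perm Atom → D → D
  act_one : ∀ x, act 1 x = x
  act_mul : ∀ π π' x, act (π * π') x = act π (act π' x)
  den : Env → Ty → Set D
  atomI : Atom → Ty → D
  constI : ℕ → Ty → D
  abs : Atom → Ty → D → D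
  app : D → D → D
  /-- each `den Γ φ` is a finitely-supported set -/
  den_fs : ∀ Γ φ, ∃ A : Finset Atom,
    ∀ π : Equiv.Perm Atom, (Nontriv π).Finite → (∀ a ∈ (A : Set Atom), π a = a) →
      act π '' den Γ φ = den Γ φ
  atomI_mem : ∀ {Γ a φ}, Functional Γ → (a, φ) ∈ Γ → atomI a φ ∈ den Γ φ
  constI_mem : ∀ {Γ}, Functional Γ → ∀ c φ, constI c φ ∈ den Γ φ
  abs_mem : ∀ {Γ a φ ψ x}, Functional Γ → a ∉ domE Γ →
    x ∈ den (insert (a, φ) Γ) ψ → abs a φ x ∈ den Γ (.arr φ ψ)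
  app_mem : ∀ {Γ φ ψ x y}, Functional Γ →
    x ∈ den Γ (.arr φ ψ) → y ∈ den Γ φ → app x y ∈ den Γ ψ
  den_inter : ∀ {Γ Γ'}, Functional Γ → Functional Γ' →
    ∀ φ, den (Γ ∩ Γ') φ = den Γ φ ∩ den Γ' φ
  den_supp : ∀ {Γ φ x}, Functional Γ → x ∈ den Γ φ → SupportsAct act (↑(domE Γ)) x
  equiv_den : ∀ π : Equiv.Perm Atom, (Nontriv π).Finite →
    ∀ Γ φ, act π '' den Γ φ = den (permE π Γ) φ
  equiv_atomI : ∀ π : Equiv.Perm Atom, (Nontriv π).Finite →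
    ∀ a φ, act π (atomI a φ) = atomI (π a) φ
  equiv_constI : ∀ π : Equiv.Perm Atom, (Nontriv π).Finite →
    ∀ c φ, act π (constI c φ) = constI c φ
  equiv_abs : ∀ π : Equiv.Perm Atom, (Nontriv π).Finite →
    ∀ a φ x, act π (abs a φ x) = abs (π a) φ (act π x)
  equiv_app : ∀ π : Equiv.Perm Atom, (Nontriv π).Finite →
    ∀ x y, act π (app x y) = app (act π x) (act π y)
  /-- (Suba): `a[a ↦ x] = x` -/
  sub_a : ∀ a φ x, app (abs a φ (atomI a φ)) x = x
  /-- (Sub#): `a # z` implies `z[a ↦ x] = z` -/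
  sub_fresh : ∀ a φ z x, FreshAct act a z → app (abs a φ z) x = z
  /-- (SubApp): `(z' z)[a ↦ x] = (z'[a ↦ x]) (z[a ↦ x])` -/
  sub_app : ∀ a φ z' z x,
    app (abs a φ (app z' z)) x = app (app (abs a φ z') x) (app (abs a φ z) x)
  /-- (Subλ): `c # x` implies `([c]z)[a ↦ x] = [c](z[a ↦ x])` -/
  sub_lam : ∀ a φ c χ z x, c ≠ a → FreshAct act c x →
    app (abs a φ (abs c χ z)) x = abs c χ (app (abs a φ z) x)

/-- The interpretation `⟦r⟧_Γ` of a term in a model, as a relation: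
`Interp M Γ r φ x` means `⟦r⟧_Γ = x` (at type `φ`). -/
inductive Interp (M : Model) : Env → Term → Ty → M.D → Prop
  | atom {Γ a φ} : (a, φ) ∈ Γ → Interp M Γ (.atom a) φ (M.atomI a φ)
  | const {Γ c φ} : Interp M Γ (.const c φ) φ (M.constI c φ)
  | app {Γ φ ψ r s x y} : Interp M Γ r (.arr φ ψ) x → Interp M Γ s φ y →
      Interp M Γ (.app r s) ψ (M.app x y)
  | lam {Γ a φ ψ r x} : a ∉ domE Γ → Interp M (insert (a, φ) Γ) r ψ x →
      Interp M Γ (.lam a φ r) (.arr φ ψ) (M.abs a φ x)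

end Model

lemma mem_domE {Γ : Env} {a : Atom} : a ∈ domE Γ ↔ ∃ ψ, (a, ψ) ∈ Γ := by
  constructor
  · intro h
    obtain ⟨⟨b, c⟩, hmem, rfl⟩ := Finset.mem_image.1 h
    exact ⟨c, hmem⟩
  · rintro ⟨c, h⟩
    exact Finset.mem_image.2 ⟨(a, c), h, rfl⟩

lemma functional_subset {Γ Δ : Env} (h : Δ ⊆ Γ) (hF : Functional Γ) : Functional Δ :=
  fun _ _ _ h1 h2 => hF (h h1) (h h2)

lemma functional_insert {Γ : Env} {a : Atom} {φ : Ty} (hF : Functional Γ)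
    (ha : a ∉ domE Γ) : Functional (insert (a, φ) Γ) := by
  intro b ψ χ hm1 hm2
  rcases Finset.mem_insert.1 hm1 with h1 | h1
  · rcases Finset.mem_insert.1 hm2 with h2 | h2
    · injection h1 with hb1 hp1
      injection h2 with hb2 hp2
      exact hp1.trans hp2.symm
    · injection h1 with hb1 hp1
      subst hb1
      exact absurd (mem_domE.2 ⟨χ, h2⟩) ha
  · rcases Finset.mem_insert.1 hm2 with h2 | h2
    · injection h2 with hb2 hp2
      subst hb2
      exact absurd (mem_domE.2 ⟨ψ, h1⟩) ha
    · exact hF h1 h2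

lemma typing_functional {Γ : Env} {r : Term} {φ : Ty} (h : Typing Γ r φ) : Functional Γ := by
  induction h with
  | V hF _ => exact hF
  | C hF => exact hF
  | L ha _ ih => exact functional_subset (Finset.subset_insert _ _) ih
  | A _ _ ih1 _ => exact ih1

lemma interp_uniq (M : Model) {Γ : Env} {r : Term} {φ : Ty} {x : M.D}
    (h : Interp M Γ r φ x) :
    ∀ {φ' : Ty} {x' : M.D}, Functional Γ → Interp M Γ r φ' x' → φ = φ' ∧ x = x' := by
  induction h with
  | atom h1 =>
    intro φ' x' hF h'
    cases h' with
    | atom h2 => obtain rfl := hF h1 h2; exact ⟨rfl, rfl⟩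
  | const =>
    intro φ' x' hF h'
    cases h'; exact ⟨rfl, rfl⟩
  | app h1 h2 ih1 ih2 =>
    intro φ' x' hF h'
    cases h' with
    | app g1 g2 =>
      obtain ⟨he, rfl⟩ := ih1 hF g1
      cases he
      obtain ⟨-, rfl⟩ := ih2 hF g2
      exact ⟨rfl, rfl⟩
  | lam ha h ih =>
    intro φ' x' hF h'
    cases h' with
    | lam hb g =>
      obtain ⟨rfl, rfl⟩ := ih (functional_insert hF ha) g
      exact ⟨rfl, rfl⟩

lemma interp_main (M : Model) {Γ : Env} {r : Term} {φ : Ty} (h : Typing Γ r φ) :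
    ∀ Δ : Env, Δ ⊆ Γ → (∀ p ∈ Γ, p.1 ∈ r.fa → p ∈ Δ) →
      ∃ x, Interp M Δ r φ x ∧ Interp M Γ r φ x ∧ x ∈ M.den Δ φ := by
  induction h with
  | @V Γ a φ hF ha =>
    intro Δ hsub hcover
    have haΔ : (a, φ) ∈ Δ := hcover _ ha (by simp [Term.fa])
    exact ⟨M.atomI a φ, .atom haΔ, .atom ha, M.atomI_mem (functional_subset hsub hF) haΔ⟩
  | @C Γ c φ hF =>
    intro Δ hsub hcover
    exact ⟨M.constI c φ, .const, .const, M.constI_mem (functional_subset hsub hF) c φ⟩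
  | @L Γ a φ ψ r ha h ih =>
    intro Δ hsub hcover
    have haΔ : a ∉ domE Δ := fun hmem => ha (by
      obtain ⟨ψ', h'⟩ := mem_domE.1 hmem
      exact mem_domE.2 ⟨ψ', hsub h'⟩)
    obtain ⟨x, hx1, hx2, hx3⟩ := ih (insert (a, φ) Δ)
      (Finset.insert_subset_insert _ hsub)
      (by
        intro p hp hpfa
        rcases Finset.mem_insert.1 hp with rfl | hp
        · exact Finset.mem_insert_self _ _
        · have hpa : p.1 ≠ a := by
            rintro he
            exact ha (mem_domE.2 ⟨p.2, he ▸ hp⟩)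
          exact Finset.mem_insert_of_mem
            (hcover p hp (by simp [Term.fa, Finset.mem_erase, hpa, hpfa])))
    exact ⟨M.abs a φ x, .lam haΔ hx1, .lam ha hx2,
      M.abs_mem (functional_subset hsub
        (functional_subset (Finset.subset_insert _ _) (typing_functional h))) haΔ hx3⟩
  | @A Γ φ ψ r s hr hs ih1 ih2 =>
    intro Δ hsub hcover
    obtain ⟨x, hx1, hx2, hx3⟩ := ih1 Δ hsub
      (fun p hp hpfa => hcover p hp (by simp [Term.fa]; exact Or.inl hpfa))
    obtain ⟨y, hy1, hy2, hy3⟩ := ih2 Δ hsub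
      (fun p hp hpfa => hcover p hp (by simp [Term.fa]; exact Or.inr hpfa))
    exact ⟨M.app x y, .app hx1 hy1, .app hx2 hy2,
      M.app_mem (functional_subset hsub (typing_functional hr)) hx3 hy3⟩

/-- **First soundness theorem.** If `Γ ⊢ r : φ` then the interpretation `⟦r⟧_Γ`
exists and is an element of `⟦φ⟧_Γ`; moreover `supp(⟦r⟧_Γ) ⊆ fa(r)`. -/
theorem first_soundness (M : Model) (Γ : Env) (r : Term) (φ : Ty)
    (h : Typing Γ r φ) :
    (∃ x, Interp M Γ r φ x) ∧
      ∀ x, Interp M Γ r φ x → x ∈ M.den Γ φ ∧ SupportsAct M.act (↑r.fa) x := by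
    constructor
    · obtain ⟨x, _, hx, _⟩ := interp_main M h Γ (le_refl _) (fun p hp _ => hp)
      exact ⟨x, hx⟩
    · intro x hx
      have hF : Functional Γ := typing_functional h
      obtain ⟨x1, _, hx1, hx1d⟩ := interp_main M h Γ (le_refl _) (fun p hp _ => hp)
      obtain rfl : x = x1 := (interp_uniq M hx hF hx1).2
      refine ⟨hx1d, ?_⟩
      set Δ : Env := Γ.filter (fun p => p.1 ∈ r.fa) with hΔ
      have hsub : Δ ⊆ Γ := Finset.filter_subset _ _
      obtain ⟨x2, _, hx2, hx2d⟩ := interp_main M h Δ hsub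
        (fun p hp hpfa => Finset.mem_filter.2 ⟨hp, hpfa⟩)
      obtain rfl : x = x2 := (interp_uniq M hx hF hx2).2
      have hsupp : SupportsAct M.act (↑(domE Δ)) x :=
        M.den_supp (functional_subset hsub hF) hx2d
      intro π hπ hfix
      refine hsupp π hπ (fun a ha => ?_)
      obtain ⟨ψ, hmem⟩ := mem_domE.1 (by exact_mod_cast ha)
      exact hfix a (by exact_mod_cast (Finset.mem_filter.1 hmem).2)
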